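/- A subset T ⊆ {1,...,n} of the form T = {2,...,m+1} (i.e., 1 ∉ T and T is a contiguous block starting at 2) for m ≥ 2 has no mandatory static one shift child; for m = 1 (T = {2}) it has exactly one mandatory static child, namely {3}, provided n ≥ 3. -/

import Mathlib

def sortedList (S : Finset ℕ) : List ℕ := S.sort (· ≤ ·)

def IsStaticOneShift (S S' : Finset ℕ) : Prop :=
  ∃ j : ℕ, j < (sortedList S).length ∧
    sortedList S' = (sortedList S).set j ((sortedList S).getD j 0 + 1)

def MandStaticParent (n : ℕ) (T S : Finset ℕ) : Prop :=
  T ⊆ Finset.Icc 1 n ∧ IsStaticOneShift T S ∧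
    ∀ U : Finset ℕ, U ⊆ Finset.Icc 1 n → IsStaticOneShift U S →
      T = U ∨ List.Lex (· < ·) (sortedList T) (sortedList U)

lemma sortedList_toFinset {l : List ℕ} (h : l.Pairwise (· < ·)) : sortedList l.toFinset = l :=
  (List.toFinset_sort _ h.nodup).mpr (h.imp le_of_lt)

lemma sortedList_Icc (a b : ℕ) : sortedList (Finset.Icc a b) = List.range' a (b + 1 - a) := by
  rw [show Finset.Icc a b = (List.range' a (b + 1 - a)).toFinset by
    ext x; simp [List.mem_range'_1]; omega]
  exact sortedList_toFinset (List.pairwise_lt_range' (s := a) (n := _))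

lemma mem_sortedList {S : Finset ℕ} {x : ℕ} : x ∈ sortedList S ↔ x ∈ S := Finset.mem_sort _

lemma sortedList_singleton (a : ℕ) : sortedList {a} = [a] := Finset.sort_singleton _ a

theorem stmt_13 (n m : ℕ) (hm : m + 1 ≤ n) :
    (2 ≤ m → ¬ ∃ S : Finset ℕ, S ⊆ Finset.Icc 1 n ∧
        MandStaticParent n (Finset.Icc 2 (m + 1)) S) ∧
      (3 ≤ n → ∀ S : Finset ℕ,
        (S ⊆ Finset.Icc 1 n ∧ MandStaticParent n {2} S) ↔ S = {3}) := by
  constructor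
  · intro hm2
    rintro ⟨S, hSn, -, ⟨j, hj, heq⟩, hmin⟩
    obtain ⟨k, rfl⟩ : ∃ k, m = k + 2 := ⟨m - 2, by omega⟩
    have hT : sortedList (Finset.Icc 2 (k + 2 + 1)) = List.range' 2 (k + 2) := by
      rw [sortedList_Icc]; congr 1
    rw [hT] at hj heq
    simp only [List.length_range'] at hj
    -- j must be the last index
    have hjlast : j = k + 1 := by
      by_contra hne
      have hj1 : j + 1 < k + 2 := by omega
      have hs : (sortedList S).Pairwise (· < ·) := (Finset.sortedLT_sort S).pairwise
      rw [heq] at hs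
      have h1 := hs.rel_get_of_lt (a := ⟨j, by simpa using hj⟩)
        (b := ⟨j + 1, by simpa using hj1⟩) (by simp [Fin.lt_def])
      simp only [List.get_eq_getElem, List.getElem_set] at h1
      rw [if_pos trivial, if_neg (by omega), List.getElem_range',
        List.getD_eq_getElem _ _ (by simpa using hj), List.getElem_range'] at h1
      omega
    subst hjlast
    -- compute sortedList S
    have hgd : (List.range' 2 (k + 2)).getD (k + 1) 0 = k + 3 := by
      rw [List.getD_eq_getElem _ _ (by simp), List.getElem_range']; omega
    have hrange : List.range' 2 (k + 2) = 2 :: List.range' 3 k ++ [k + 3] := by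
      have h1 : List.range' 2 (k + 2) = List.range' 2 (k + 1) ++ [2 + 1 * (k + 1)] :=
        List.range'_concat (s := 2) (n := k + 1)
      have h2 : 2 + 1 * (k + 1) = k + 3 := by omega
      rw [h1, h2, List.range'_succ, List.cons_append]
    have hset : (List.range' 2 (k + 2)).set (k + 1) (k + 4) = 2 :: List.range' 3 k ++ [k + 4] := by
      rw [hrange]
      rw [show (2 :: List.range' 3 k ++ [k + 3] : List ℕ)
          = (2 :: List.range' 3 k) ++ [k + 3] from rfl,
        List.set_append_right _ _ (by simp)]
      simp
    have hS : sortedList S = 2 :: List.range' 3 k ++ [k + 4] := by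
      rw [heq, hgd, show k + 3 + 1 = k + 4 from rfl, hset]
    -- the competitor U
    have hUsort : (1 :: (List.range' 3 k ++ [k + 4])).Pairwise (· < ·) := by
      constructor
      · intro b hb
        simp only [List.mem_append, List.mem_singleton, List.mem_range'_1] at hb
        rcases hb with h | h <;> omega
      · refine List.pairwise_append.mpr ⟨List.pairwise_lt_range' (s := 3) (n := k), List.pairwise_singleton _ _, ?_⟩
        intro a ha b hb
        simp only [List.mem_range'_1] at ha
        simp only [List.mem_singleton] at hb
        omega
    set U : Finset ℕ := (1 :: (List.range' 3 k ++ [k + 4])).toFinset with hUdef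
    have hU : sortedList U = 1 :: (List.range' 3 k ++ [k + 4]) := sortedList_toFinset hUsort
    have hk4 : k + 4 ≤ n := by
      have h1 : k + 4 ∈ S := by
        rw [← mem_sortedList, hS]; simp
      have h2 := hSn h1
      rw [Finset.mem_Icc] at h2
      omega
    have hUsub : U ⊆ Finset.Icc 1 n := by
      intro x hx
      simp only [hUdef, List.mem_toFinset, List.mem_cons, List.mem_append, List.not_mem_nil, or_false,
        List.mem_range'_1] at hx
      simp only [Finset.mem_Icc]
      rcases hx with h | h | h <;> omega
    have hUshift : IsStaticOneShift U S := by
      refine ⟨0, by rw [hU]; simp, ?_⟩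
      rw [hU, hS]
      rfl
    rcases hmin U hUsub hUshift with h | h
    · have h1 : (1 : ℕ) ∈ Finset.Icc 2 (k + 2 + 1) := by
        rw [h, hUdef]; simp
      rw [Finset.mem_Icc] at h1
      omega
    · rw [hT, hU, hrange] at h
      cases h with
      | rel h => omega
  · intro hn S
    constructor
    · rintro ⟨hSn, -, ⟨j, hj, heq⟩, -⟩
      rw [sortedList_singleton] at hj heq
      obtain rfl : j = 0 := by simp at hj; omega
      simp at heq
      ext x; rw [← mem_sortedList, heq]; simp
    · rintro rfl
      have h3 : sortedList {3} = [3] := sortedList_singleton 3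
      refine ⟨?_, ?_, ⟨0, by simp [sortedList_singleton], by simp [sortedList_singleton, h3]⟩, ?_⟩
      · intro x hx; simp at hx; simp [hx]; omega
      · intro x hx; simp at hx; simp [hx]; omega
      · rintro U hU ⟨j, hj, heq⟩
        rw [h3] at heq
        have hlen : (sortedList U).length = 1 := by
          have := congrArg List.length heq; simpa using this.symm
        obtain ⟨a, ha⟩ := List.length_eq_one_iff.mp hlen
        rw [ha] at heq hj
        obtain rfl : j = 0 := by simp at hj; omega
        simp at heq
        left
        ext x; rw [← mem_sortedList (S := U), ha]; simp; omega
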